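/- Let σ ∈ S_k and τ ∈ S_n with σ ≤ τ in the permutation pattern poset, and suppose n − k = 2. If the pair (σ, τ) has an interval block, then (σ, τ) has exactly one interval block I, which has two elements, and the interval [σ, τ] is a three-element chain whose middle element is obtained from τ by removing one of the two letters of I. -/

import Mathlib

/-- `f` gives an occurrence of the pattern `σ` in `τ`: the positions `f 0 < f 1 < ⋯`
carry letters of `τ` in the same relative order as `σ`. -/
def IsOccurrence {k n : ℕ} (σ : Equiv.Perm (Fin k)) (τ : Equiv.Perm (Fin n))
    (f : Fin k → Fin n) : Prop :=
  StrictMono f ∧ ∀ i j : Fin k, σ i < σ j ↔ τ (f i) < τ (f j)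

/-- Two sets of kept positions `S, S'` (each containing the marked positions `A`)
determine the same element of the occurrence poset: the words of `τ` read along `S`
and along `S'` are order isomorphic, with the marked positions corresponding. -/
def OccEquiv {n : ℕ} (τ : Equiv.Perm (Fin n)) (A S S' : Finset (Fin n)) : Prop :=
  ∃ g : {x // x ∈ S} ≃o {x // x ∈ S'},
    (∀ a b : {x // x ∈ S}, τ a.1 < τ b.1 ↔ τ (g a).1 < τ (g b).1) ∧
    (∀ a : {x // x ∈ S}, a.1 ∈ A ↔ (g a).1 ∈ A)

/-- Representatives of elements of the occurrence poset with marked positions `A`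
and ground set `U`: sets of kept positions between `A` and `U`. -/
def OccCarrier {n : ℕ} (A U : Finset (Fin n)) := {S : Finset (Fin n) // A ⊆ S ∧ S ⊆ U}

/-- The occurrence poset `[⟨σ⟩, τ]` (with ground set `U`): kept-position sets modulo
order isomorphism respecting the marked occurrence. -/
def OccPoset {n : ℕ} (τ : Equiv.Perm (Fin n)) (A U : Finset (Fin n)) :=
  Quot (fun S S' : OccCarrier A U => OccEquiv τ A S.1 S'.1)

def occMk {n : ℕ} (τ : Equiv.Perm (Fin n)) (A U : Finset (Fin n)) (S : OccCarrier A U) :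
    OccPoset τ A U :=
  Quot.mk _ S

/-- The partial order of the occurrence poset: deletion of unmarked letters. -/
def occLE {n : ℕ} (τ : Equiv.Perm (Fin n)) (A U : Finset (Fin n))
    (q q' : OccPoset τ A U) : Prop :=
  ∃ S S' : OccCarrier A U, q = occMk τ A U S ∧ q' = occMk τ A U S' ∧ S.1 ⊆ S'.1

/-- The bottom element `⟨σ⟩` of the occurrence poset. -/
def occBot {n : ℕ} (τ : Equiv.Perm (Fin n)) (A U : Finset (Fin n)) (h : A ⊆ U) :
    OccPoset τ A U :=
  occMk τ A U ⟨A, subset_rfl, h⟩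

/-- The top element `τ` of the occurrence poset. -/
def occTop {n : ℕ} (τ : Equiv.Perm (Fin n)) (A U : Finset (Fin n)) (h : A ⊆ U) :
    OccPoset τ A U :=
  occMk τ A U ⟨U, h, subset_rfl⟩

/-- `J` is an interval block of the pattern of `τ` restricted to the kept positions `S`:
`J` consists of at least two kept positions, consecutive among `S` both in position and
in value. -/
def IsBlockIn {n : ℕ} (τ : Equiv.Perm (Fin n)) (S J : Finset (Fin n)) : Prop :=
  J ⊆ S ∧ 2 ≤ J.card ∧
    (∀ x ∈ J, ∀ y ∈ J, ∀ z ∈ S, x ≤ z → z ≤ y → z ∈ J) ∧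
    (∀ x ∈ J, ∀ y ∈ J, ∀ z ∈ S, τ x ≤ τ z → τ z ≤ τ y → z ∈ J)

/-- The pair (marked occurrence `A`, permutation given by kept positions `S`) has an
interval block: an interval block disjoint from the occurrence. -/
def PairHasBlock {n : ℕ} (τ : Equiv.Perm (Fin n)) (A S : Finset (Fin n)) : Prop :=
  ∃ J : Finset (Fin n), IsBlockIn τ S J ∧ ∀ p ∈ J, p ∉ A

/-- An element of the occurrence poset is interval free if (a representative of) it has
no interval block disjoint from the marked occurrence. -/
def occIntervalFree {n : ℕ} (τ : Equiv.Perm (Fin n)) (A U : Finset (Fin n))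
    (q : OccPoset τ A U) : Prop :=
  ∃ S : OccCarrier A U, q = occMk τ A U S ∧ ¬ PairHasBlock τ A S.1

theorem OccEquiv.card_eq {n : ℕ} {τ : Equiv.Perm (Fin n)} {A S S' : Finset (Fin n)}
    (h : OccEquiv τ A S S') : S.card = S'.card := by
  obtain ⟨g, -, -⟩ := h
  simpa using Fintype.card_congr g.toEquiv

/-- The rank of an element of the occurrence poset: its number of letters minus `k`. -/
def occRank {n : ℕ} (τ : Equiv.Perm (Fin n)) (A U : Finset (Fin n)) (k : ℕ) :
    OccPoset τ A U → ℕ :=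
  Quot.lift (fun S => S.1.card - k) (fun S S' h => by
    have hc := OccEquiv.card_eq h
    show S.1.card - k = S'.1.card - k
    omega)

/-- Positions `p` and `q` lie in the same region: no position between them (inclusive)
is a marked position. -/
def SameRegion {n : ℕ} (A : Finset (Fin n)) (p q : Fin n) : Prop :=
  ∀ z : Fin n, min p q ≤ z → z ≤ max p q → z ∉ A

/-- The pair (occurrence with marked positions `A`, `τ`) is separated: any two letters in
the same region are separated in value by a letter of the occurrence. -/
def Separated {n : ℕ} (τ : Equiv.Perm (Fin n)) (A : Finset (Fin n)) : Prop :=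
  ∀ p q : Fin n, SameRegion A p q → τ p < τ q → ∃ a ∈ A, τ p < τ a ∧ τ a < τ q

/-- The letters at positions `p, q` (with `τ p < τ q`) are similar: same region, and no
letter of the occurrence lies strictly between them in value. -/
def SimilarPos {n : ℕ} (τ : Equiv.Perm (Fin n)) (A : Finset (Fin n)) (p q : Fin n) : Prop :=
  SameRegion A p q ∧ τ p < τ q ∧ ∀ a ∈ A, ¬ (τ p < τ a ∧ τ a < τ q)

/-- A group of similar letters: at least two letters, pairwise similar. -/
def IsSimilarGroup {n : ℕ} (τ : Equiv.Perm (Fin n)) (A : Finset (Fin n))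
    (G : Finset (Fin n)) : Prop :=
  2 ≤ G.card ∧ ∀ p ∈ G, ∀ q ∈ G, τ p < τ q → SimilarPos τ A p q

/-- A maximal group of similar letters: one contained in no strictly larger group. -/
def IsMaxSimilarGroup {n : ℕ} (τ : Equiv.Perm (Fin n)) (A : Finset (Fin n))
    (G : Finset (Fin n)) : Prop :=
  IsSimilarGroup τ A G ∧ ∀ G' : Finset (Fin n), IsSimilarGroup τ A G' → G ⊆ G' → G' = G

/-- The occurrence poset is a boolean algebra: isomorphic to the poset of all subsets of
a finite set, ordered by inclusion. -/
def IsBooleanOccPoset {n : ℕ} (τ : Equiv.Perm (Fin n)) (A U : Finset (Fin n)) : Prop :=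
  ∃ (m : ℕ) (e : OccPoset τ A U ≃ Finset (Fin m)),
    ∀ q q' : OccPoset τ A U, occLE τ A U q q' ↔ e q ⊆ e q'

/-- The pattern poset `P`: permutations of every length, a permutation of length `m` being
an element of `Equiv.Perm (Fin m)` (its standard form). -/
def PatternPoset := Σ m : ℕ, Equiv.Perm (Fin m)

/-- The order of the pattern poset: pattern containment. -/
def patternLE (a b : PatternPoset) : Prop :=
  ∃ f : Fin a.1 → Fin b.1, IsOccurrence a.2 b.2 f

/-- `b` covers `a` in the pattern poset: `a < b` and `b` has one letter more than `a`. -/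
def patternCovers (a b : PatternPoset) : Prop :=
  patternLE a b ∧ a ≠ b ∧ b.1 = a.1 + 1



lemma fin_strictMono_id {m : ℕ} {f : Fin m → Fin m} (hf : StrictMono f) : f = id := by
  have hwf : WellFoundedLT (Fin m) := inferInstance
  have hinj : Function.Injective f := hf.injective
  have hbij : Function.Bijective f := (Finite.injective_iff_bijective).1 hinj
  let e : Fin m ≃o Fin m := (hf.orderIsoOfSurjective f hbij.2)
  funext i
  have h1 : i ≤ f i := hf.le_apply
  have h2 : i ≤ e.symm i := (e.symm.strictMono).le_apply
  have h3 : e i ≤ i := by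
    have := e.monotone h2
    simpa using this
  exact le_antisymm (h3 : f i ≤ i) h1

lemma perm_eq_of_iff {m : ℕ} {π ρ : Equiv.Perm (Fin m)}
    (h : ∀ i j, π i < π j ↔ ρ i < ρ j) : π = ρ := by
  have hm : StrictMono (fun a => π (ρ.symm a)) := by
    intro a b hab
    have : ρ (ρ.symm a) < ρ (ρ.symm b) := by simpa using hab
    exact (h _ _).2 this
  have := fin_strictMono_id hm
  ext x
  have h2 := congrFun this (ρ x)
  simp only [Function.comp, id, Equiv.symm_apply_apply] at h2
  exact congrArg Fin.val h2

/-- The permutation obtained from `τ` by deleting the letter at position `p`. -/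
def delPerm {m : ℕ} (τ : Equiv.Perm (Fin (m+1))) (p : Fin (m+1)) : Equiv.Perm (Fin m) :=
  Equiv.removeNone ((finSuccEquiv' p).symm.trans (τ.trans (finSuccEquiv' (τ p))))

lemma delPerm_succAbove {m : ℕ} (τ : Equiv.Perm (Fin (m+1))) (p : Fin (m+1)) (i : Fin m) :
    τ (p.succAbove i) = (τ p).succAbove (delPerm τ p i) := by
  set e := (finSuccEquiv' p).symm.trans (τ.trans (finSuccEquiv' (τ p))) with he
  have he1 : e (some i) = finSuccEquiv' (τ p) (τ (p.succAbove i)) := by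
    simp [he]
  have hne : τ (p.succAbove i) ≠ τ p := fun hc => (p.succAbove_ne i) (τ.injective hc)
  have hsome : ∃ y, e (some i) = some y := by
    rw [he1]
    rcases Fin.exists_succAbove_eq hne with ⟨y, hy⟩
    exact ⟨y, by rw [← hy, finSuccEquiv'_succAbove]⟩
  have := Equiv.removeNone_some e hsome
  rw [he1] at this
  have := congrArg (finSuccEquiv' (τ p)).symm this
  simpa [delPerm, he] using this.symm


lemma succAbove_adj {m : ℕ} {p q : Fin (m+1)} (h : (q:ℕ) = (p:ℕ) + 1) (i : Fin m) :
    q.succAbove i = Equiv.swap p q (p.succAbove i) := by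
  have hpq : p < q := by rw [Fin.lt_def]; omega
  have hcs : ((i.castSucc : Fin (m+1)) : ℕ) = (i : ℕ) := rfl
  have hs : ((i.succ : Fin (m+1)) : ℕ) = (i : ℕ) + 1 := rfl
  rcases lt_trichotomy ((i : ℕ)) (p : ℕ) with hlt | heq | hgt
  · have h1 : i.castSucc < p := by rw [Fin.lt_def, hcs]; omega
    have h2 : i.castSucc < q := by rw [Fin.lt_def, hcs]; omega
    rw [Fin.succAbove_of_castSucc_lt p i h1, Fin.succAbove_of_castSucc_lt q i h2,
      Equiv.swap_apply_of_ne_of_ne (ne_of_lt h1) (ne_of_lt h2)]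
  · have h1 : p ≤ i.castSucc := by rw [Fin.le_def, hcs]; omega
    have h2 : i.castSucc < q := by rw [Fin.lt_def, hcs]; omega
    have hsq : i.succ = q := by
      apply Fin.ext; rw [hs]; omega
    have hc : i.castSucc = p := by apply Fin.ext; rw [hcs]; omega
    rw [Fin.succAbove_of_le_castSucc p i h1, Fin.succAbove_of_castSucc_lt q i h2, hsq,
      Equiv.swap_apply_right, hc]
  · have h1 : p ≤ i.castSucc := by rw [Fin.le_def, hcs]; omega
    have h2 : q ≤ i.castSucc := by rw [Fin.le_def, hcs]; omega
    have hne1 : i.succ ≠ p := by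
      intro hc; have := congrArg Fin.val hc; rw [hs] at this; omega
    have hne2 : i.succ ≠ q := by
      intro hc; have := congrArg Fin.val hc; rw [hs] at this; omega
    rw [Fin.succAbove_of_le_castSucc p i h1, Fin.succAbove_of_le_castSucc q i h2,
      Equiv.swap_apply_of_ne_of_ne hne1 hne2]

lemma tau_cmp_swap {m : ℕ} (τ : Equiv.Perm (Fin m)) {p q : Fin m}
    (hv : ((τ p : ℕ)) + 1 = (τ q : ℕ) ∨ ((τ q : ℕ)) + 1 = (τ p : ℕ)) {a b : Fin m}
    (ha : a ≠ p) (hb : b ≠ p) :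
    (τ a < τ b ↔ τ (Equiv.swap p q a) < τ (Equiv.swap p q b)) := by
  by_cases haq : a = q <;> by_cases hbq : b = q
  · subst haq; subst hbq; simp
  · subst haq
    rw [Equiv.swap_apply_right, Equiv.swap_apply_of_ne_of_ne hb hbq]
    have h1 : (τ b : ℕ) ≠ (τ p : ℕ) := fun hc => hb (τ.injective (Fin.ext hc))
    have h2 : (τ b : ℕ) ≠ (τ a : ℕ) := fun hc => hbq (τ.injective (Fin.ext hc))
    rw [Fin.lt_def, Fin.lt_def]; omega
  · subst hbq
    rw [Equiv.swap_apply_right, Equiv.swap_apply_of_ne_of_ne ha haq]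
    have h1 : (τ a : ℕ) ≠ (τ p : ℕ) := fun hc => ha (τ.injective (Fin.ext hc))
    have h2 : (τ a : ℕ) ≠ (τ b : ℕ) := fun hc => haq (τ.injective (Fin.ext hc))
    rw [Fin.lt_def, Fin.lt_def]; omega
  · rw [Equiv.swap_apply_of_ne_of_ne ha haq, Equiv.swap_apply_of_ne_of_ne hb hbq]

/-- if `n - k = 2` and the pair `(σ, τ)` has an interval block, then it has
exactly one interval block `I`, which has two elements, and `[σ, τ]` is a three-element
chain whose middle element is obtained from `τ` by removing one of the two letters of `I`. -/
theorem interval_block_rank_two_chain {k n : ℕ} (hk : 0 < k)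
    (σ : Equiv.Perm (Fin k)) (τ : Equiv.Perm (Fin n))
    (hle : patternLE ⟨k, σ⟩ ⟨n, τ⟩) (hrank : n = k + 2)
    (hblock : ∃ J : Finset (Fin n), IsBlockIn τ Finset.univ J ∧
      ∀ f : Fin k → Fin n, IsOccurrence σ τ f → ∀ i : Fin k, f i ∉ J) :
    ∃ J : Finset (Fin n),
      (IsBlockIn τ Finset.univ J ∧
        ∀ f : Fin k → Fin n, IsOccurrence σ τ f → ∀ i : Fin k, f i ∉ J) ∧
      (∀ J' : Finset (Fin n),
        (IsBlockIn τ Finset.univ J' ∧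
          ∀ f : Fin k → Fin n, IsOccurrence σ τ f → ∀ i : Fin k, f i ∉ J') → J' = J) ∧
      J.card = 2 ∧
      ∃ (ρ : Equiv.Perm (Fin (k + 1))) (g : Fin (k + 1) → Fin n) (p : Fin n),
        p ∈ J ∧ IsOccurrence ρ τ g ∧ Set.range g = {q : Fin n | q ≠ p} ∧
        patternLE ⟨k, σ⟩ ⟨k + 1, ρ⟩ ∧ patternLE ⟨k + 1, ρ⟩ ⟨n, τ⟩ ∧
        (⟨k, σ⟩ : PatternPoset) ≠ ⟨k + 1, ρ⟩ ∧
        (⟨k + 1, ρ⟩ : PatternPoset) ≠ ⟨n, τ⟩ ∧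
        (⟨k, σ⟩ : PatternPoset) ≠ ⟨n, τ⟩ ∧
        {x : PatternPoset | patternLE ⟨k, σ⟩ x ∧ patternLE x ⟨n, τ⟩} =
          {⟨k, σ⟩, ⟨k + 1, ρ⟩, ⟨n, τ⟩} := by
  subst hrank
  obtain ⟨f₀, hf₀⟩ := hle
  obtain ⟨J, hJblock, hJavoid⟩ := hblock
  classical
  have hT₀card : ((Finset.image f₀ Finset.univ)ᶜ : Finset (Fin (k+2))).card = 2 := by
    have h1 : (Finset.image f₀ Finset.univ).card = k := by
      rw [Finset.card_image_of_injective _ hf₀.1.injective, Finset.card_univ, Fintype.card_fin]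
    rw [Finset.card_compl, h1, Fintype.card_fin]
    omega
  have huniq : ∀ J' : Finset (Fin (k+2)),
      (IsBlockIn τ Finset.univ J' ∧
        ∀ f : Fin k → Fin (k+2), IsOccurrence σ τ f → ∀ i : Fin k, f i ∉ J') →
      J' = (Finset.image f₀ Finset.univ)ᶜ := by
    rintro J' ⟨hb, havoid⟩
    have hsub : J' ⊆ (Finset.image f₀ Finset.univ)ᶜ := by
      intro x hx
      rw [Finset.mem_compl]
      intro hmem
      rw [Finset.mem_image] at hmem
      obtain ⟨i, -, rfl⟩ := hmem
      exact havoid f₀ hf₀ i hx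
    have h2 := hb.2.1
    exact Finset.eq_of_subset_of_card_le hsub (by omega)
  have hJT : J = (Finset.image f₀ Finset.univ)ᶜ := huniq J ⟨hJblock, hJavoid⟩
  have hJcard : J.card = 2 := by rw [hJT]; exact hT₀card
  have himg : ∀ f : Fin k → Fin (k+2), IsOccurrence σ τ f →
      Finset.image f Finset.univ = Jᶜ := by
    intro f hf
    have hsub : Finset.image f Finset.univ ⊆ Jᶜ := by
      intro x hx
      rw [Finset.mem_compl]
      rw [Finset.mem_image] at hx
      obtain ⟨i, -, rfl⟩ := hx
      exact hJavoid f hf i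
    apply Finset.eq_of_subset_of_card_le hsub
    have h1 : (Finset.image f Finset.univ).card = k := by
      rw [Finset.card_image_of_injective _ hf.1.injective, Finset.card_univ, Fintype.card_fin]
    have h2 : (Jᶜ : Finset (Fin (k+2))).card = k + 2 - J.card := by
      rw [Finset.card_compl, Fintype.card_fin]
    omega
  obtain ⟨p, q, hpq, hJpq⟩ : ∃ p q : Fin (k+2), p < q ∧ J = {p, q} := by
    obtain ⟨a, b, hab, hJab⟩ := Finset.card_eq_two.1 hJcard
    rcases lt_or_gt_of_ne hab with h | h
    · exact ⟨a, b, h, hJab⟩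
    · exact ⟨b, a, h, by rw [hJab, Finset.pair_comm]⟩
  have hpJ : p ∈ J := by rw [hJpq]; simp
  have hqJ : q ∈ J := by rw [hJpq]; simp
  have hpq' : (p : ℕ) < (q : ℕ) := hpq
  have hposadj : (q : ℕ) = (p : ℕ) + 1 := by
    by_contra hcon
    have hqlt : (q : ℕ) < k + 2 := q.isLt
    have hzJ : (⟨(p:ℕ)+1, by omega⟩ : Fin (k+2)) ∈ J :=
      hJblock.2.2.1 p hpJ q hqJ _ (Finset.mem_univ _)
        (by rw [Fin.le_def]; show (p:ℕ) ≤ (p:ℕ)+1; omega)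
        (by rw [Fin.le_def]; show (p:ℕ)+1 ≤ (q:ℕ); omega)
    rw [hJpq] at hzJ
    simp only [Finset.mem_insert, Finset.mem_singleton] at hzJ
    rcases hzJ with h | h
    · have h2 : (p:ℕ)+1 = (p:ℕ) := congrArg Fin.val h
      omega
    · have h2 : (p:ℕ)+1 = (q:ℕ) := congrArg Fin.val h
      omega
  have hvadj : ((τ p : ℕ)) + 1 = (τ q : ℕ) ∨ ((τ q : ℕ)) + 1 = (τ p : ℕ) := by
    by_contra hcon
    push_neg at hcon
    have hne : (τ p : ℕ) ≠ (τ q : ℕ) := fun hc => (ne_of_lt hpq) (τ.injective (Fin.ext hc))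
    rcases Nat.lt_or_ge (τ p : ℕ) (τ q : ℕ) with hv | hv
    · have hqlt : (τ q : ℕ) < k + 2 := (τ q).isLt
      have hww : τ (τ.symm ⟨(τ p : ℕ)+1, by omega⟩) = ⟨(τ p : ℕ)+1, by omega⟩ :=
        τ.apply_symm_apply _
      have hzJ : τ.symm ⟨(τ p : ℕ)+1, by omega⟩ ∈ J :=
        hJblock.2.2.2 p hpJ q hqJ _ (Finset.mem_univ _)
          (by rw [hww, Fin.le_def]; show (τ p : ℕ) ≤ (τ p : ℕ)+1; omega)
          (by rw [hww, Fin.le_def]; show (τ p : ℕ)+1 ≤ (τ q : ℕ); omega)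
      rw [hJpq] at hzJ
      simp only [Finset.mem_insert, Finset.mem_singleton] at hzJ
      rcases hzJ with h | h
      · have h2 : τ (τ.symm ⟨(τ p : ℕ)+1, by omega⟩) = τ p := congrArg τ h
        rw [hww] at h2
        have h3 : (τ p : ℕ)+1 = (τ p : ℕ) := congrArg Fin.val h2
        omega
      · have h2 : τ (τ.symm ⟨(τ p : ℕ)+1, by omega⟩) = τ q := congrArg τ h
        rw [hww] at h2
        have h3 : (τ p : ℕ)+1 = (τ q : ℕ) := congrArg Fin.val h2
        exact hcon.1 h3
    · have hplt : (τ p : ℕ) < k + 2 := (τ p).isLt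
      have hww : τ (τ.symm ⟨(τ q : ℕ)+1, by omega⟩) = ⟨(τ q : ℕ)+1, by omega⟩ :=
        τ.apply_symm_apply _
      have hzJ : τ.symm ⟨(τ q : ℕ)+1, by omega⟩ ∈ J :=
        hJblock.2.2.2 q hqJ p hpJ _ (Finset.mem_univ _)
          (by rw [hww, Fin.le_def]; show (τ q : ℕ) ≤ (τ q : ℕ)+1; omega)
          (by rw [hww, Fin.le_def]; show (τ q : ℕ)+1 ≤ (τ p : ℕ); omega)
      rw [hJpq] at hzJ
      simp only [Finset.mem_insert, Finset.mem_singleton] at hzJ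
      rcases hzJ with h | h
      · have h2 : τ (τ.symm ⟨(τ q : ℕ)+1, by omega⟩) = τ p := congrArg τ h
        rw [hww] at h2
        have h3 : (τ q : ℕ)+1 = (τ p : ℕ) := congrArg Fin.val h2
        exact hcon.2 h3
      · have h2 : τ (τ.symm ⟨(τ q : ℕ)+1, by omega⟩) = τ q := congrArg τ h
        rw [hww] at h2
        have h3 : (τ q : ℕ)+1 = (τ q : ℕ) := congrArg Fin.val h2
        omega
  obtain ⟨ρ, hρ⟩ : ∃ ρ' : Equiv.Perm (Fin (k+1)), ρ' = delPerm τ p := ⟨_, rfl⟩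
  have hkey : ∀ i : Fin (k+1), τ (p.succAbove i) = (τ p).succAbove (ρ i) := by
    intro i; rw [hρ]; exact delPerm_succAbove τ p i
  have hgocc : IsOccurrence ρ τ p.succAbove := by
    refine ⟨Fin.strictMono_succAbove p, fun i j => ?_⟩
    rw [hkey i, hkey j]
    exact Fin.succAbove_lt_succAbove_iff.symm
  have hf₀p : ∀ i, f₀ i ≠ p := fun i hc => hJavoid f₀ hf₀ i (by rw [hc]; exact hpJ)
  choose h₀ hh₀ using fun i => Fin.exists_succAbove_eq (hf₀p i)
  have hmono₀ : StrictMono h₀ := by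
    intro i j hij
    have h1 := hf₀.1 hij
    rw [← hh₀ i, ← hh₀ j] at h1
    exact Fin.succAbove_lt_succAbove_iff.mp h1
  have hσρ : IsOccurrence σ ρ h₀ := by
    refine ⟨hmono₀, fun i j => ?_⟩
    rw [hf₀.2 i j, ← hh₀ i, ← hh₀ j, hkey (h₀ i), hkey (h₀ j)]
    exact Fin.succAbove_lt_succAbove_iff
  have hσρle : patternLE ⟨k, σ⟩ ⟨k+1, ρ⟩ := ⟨h₀, hσρ⟩
  have hρτle : patternLE ⟨k+1, ρ⟩ ⟨k+2, τ⟩ := ⟨p.succAbove, hgocc⟩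
  have hrange : Set.range p.succAbove = {x : Fin (k+2) | x ≠ p} := by
    rw [Fin.range_succAbove]; ext x; simp
  have hne1 : (⟨k, σ⟩ : PatternPoset) ≠ ⟨k+1, ρ⟩ := by
    intro hc
    have h1 : k = k + 1 := congrArg Sigma.fst hc
    omega
  have hne2 : (⟨k+1, ρ⟩ : PatternPoset) ≠ ⟨k+2, τ⟩ := by
    intro hc
    have h1 : k + 1 = k + 2 := congrArg Sigma.fst hc
    omega
  have hne3 : (⟨k, σ⟩ : PatternPoset) ≠ ⟨k+2, τ⟩ := by
    intro hc
    have h1 : k = k + 2 := congrArg Sigma.fst hc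
    omega
  refine ⟨J, ⟨hJblock, hJavoid⟩, fun J' h => (huniq J' h).trans hJT.symm, hJcard,
    ρ, p.succAbove, p, hpJ, hgocc, hrange, hσρle, hρτle, hne1, hne2, hne3, ?_⟩
  ext x
  simp only [Set.mem_setOf_eq, Set.mem_insert_iff, Set.mem_singleton_iff]
  constructor
  · rintro ⟨⟨u, hu⟩, ⟨v, hv'⟩⟩
    obtain ⟨m, π⟩ := x
    have hm1 : k ≤ m := by
      have := Fintype.card_le_of_injective u hu.1.injective
      simpa using this
    have hm2 : m ≤ k + 2 := by
      have := Fintype.card_le_of_injective v hv'.1.injective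
      simpa using this
    have hm : m = k ∨ m = k + 1 ∨ m = k + 2 := by omega
    rcases hm with rfl | rfl | rfl
    · left
      have hu' : u = id := fin_strictMono_id hu.1
      have hσπ : σ = π := perm_eq_of_iff (fun i j => by
        have h1 := hu.2 i j; rw [hu'] at h1; simpa using h1)
      rw [hσπ]
    · right; left
      have hw : IsOccurrence σ τ (v ∘ u) :=
        ⟨hv'.1.comp hu.1, fun i j => (hu.2 i j).trans (hv'.2 (u i) (u j))⟩
      have hvcard : ((Finset.image v Finset.univ)ᶜ : Finset (Fin (k+2))).card = 1 := by
        rw [Finset.card_compl, Finset.card_image_of_injective _ hv'.1.injective,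
          Finset.card_univ, Fintype.card_fin]
        have hcc : Fintype.card (Fin ((⟨k + 1, π⟩ : PatternPoset).fst)) = k + 1 :=
          Fintype.card_fin (k+1)
        rw [hcc]
        omega
      obtain ⟨r, hr⟩ := Finset.card_eq_one.1 hvcard
      have hrmem : r ∈ (Finset.image v Finset.univ)ᶜ := by rw [hr]; simp
      rw [Finset.mem_compl] at hrmem
      have hrange_v : Set.range v = Set.range r.succAbove := by
        rw [Fin.range_succAbove]
        ext y
        simp only [Set.mem_range, Set.mem_compl_iff, Set.mem_singleton_iff]
        constructor
        · rintro ⟨i, rfl⟩ hc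
          exact hrmem (hc ▸ Finset.mem_image_of_mem v (Finset.mem_univ i))
        · intro hy
          have hy2 : y ∈ Finset.image v Finset.univ := by
            by_contra hc
            have h3 : y ∈ (Finset.image v Finset.univ)ᶜ := Finset.mem_compl.2 hc
            rw [hr, Finset.mem_singleton] at h3
            exact hy h3
          rw [Finset.mem_image] at hy2
          obtain ⟨i, -, hi⟩ := hy2
          exact ⟨i, hi⟩
      have hrJ : r ∈ J := by
        by_contra hc
        have h1 : r ∈ Jᶜ := Finset.mem_compl.2 hc
        rw [← himg (v ∘ u) hw] at h1
        rw [Finset.mem_image] at h1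
        obtain ⟨i, -, hi⟩ := h1
        exact hrmem (by rw [← hi]; exact Finset.mem_image_of_mem v (Finset.mem_univ (u i)))
      have hwfd : WellFoundedLT (Fin ((⟨k + 1, π⟩ : PatternPoset).fst)) :=
        (inferInstance : WellFoundedLT (Fin (k+1)))
      have hv_eq : v = r.succAbove :=
        (hv'.1.range_inj (Fin.strictMono_succAbove r)).1 hrange_v
      have hrpq : r = p ∨ r = q := by rw [hJpq] at hrJ; simpa using hrJ
      have hπρ : ∀ i j, π i < π j ↔ ρ i < ρ j := by
        intro i j
        rw [hv'.2 i j, hv_eq]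
        rcases hrpq with rfl | rfl
        · rw [hkey i, hkey j]
          exact Fin.succAbove_lt_succAbove_iff
        · rw [succAbove_adj hposadj i, succAbove_adj hposadj j,
            ← tau_cmp_swap τ hvadj (Fin.succAbove_ne p i) (Fin.succAbove_ne p j),
            hkey i, hkey j]
          exact Fin.succAbove_lt_succAbove_iff
      have hπρ' : π = ρ := perm_eq_of_iff hπρ
      rw [hπρ']
    · right; right
      have hv'' : v = id := fin_strictMono_id hv'.1
      have hπτ : π = τ := perm_eq_of_iff (fun i j => by
        have h1 := hv'.2 i j; rw [hv''] at h1; simpa using h1)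
      rw [hπτ]
      rfl
  · have hrefl : ∀ (a : PatternPoset), patternLE a a :=
      fun a => ⟨id, strictMono_id, fun i j => Iff.rfl⟩
    rintro (rfl | rfl | rfl)
    · exact ⟨hrefl _, ⟨f₀, hf₀⟩⟩
    · exact ⟨hσρle, hρτle⟩
    · exact ⟨⟨f₀, hf₀⟩, hrefl _⟩
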